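/- arXiv:0911.3813 — 2 statements merged into one kernel-verified Lean document; each statement's English description precedes it below -/
import Mathlib

section
/- Let H be a complex Hilbert space with group action κ, let s ∈ ℝ and let φ ∈ 𝒮(ℝ^q) be a scalar Schwartz function. Then there exists a constant C > 0 such that for all u ∈ 𝒮(ℝ^q, H): ‖φ · u‖_{𝒲^s} ≤ C · ‖u‖_{𝒲^s}, where (φ·u)(y) := φ(y)·u(y); i.e. multiplication by φ extends to a continuous operator M_φ : 𝒲^s(ℝ^q, H) → 𝒲^s(ℝ^q, H). -/
open MeasureTheory Complex
open scoped ENNReal NNReal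

noncomputable section

/-- `ℝ^q` as a Euclidean space. -/
abbrev Eucl (q : ℕ) := EuclideanSpace ℝ (Fin q)

/-- The "Japanese bracket" `⟨η⟩ = (1+|η|²)^(1/2)`. -/
def jap {q : ℕ} (η : Eucl q) : ℝ := Real.sqrt (1 + ‖η‖ ^ 2)

/-- The Fourier transform `û(η) = ∫ e^{−i y·η} u(y) dy` of an `H`-valued function. -/
def ft {q : ℕ} {H : Type*} [NormedAddCommGroup H] [NormedSpace ℂ H]
    (u : Eucl q → H) (η : Eucl q) : H :=
  ∫ y, Complex.exp (-Complex.I * ((inner ℝ y η : ℝ) : ℂ)) • u y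

/-- A group action on a complex Banach/Hilbert space `H`: a family `κ_λ`, `λ > 0`, of bounded
invertible linear operators on `H` with `κ_λ ∘ κ_ν = κ_{λν}` which is strongly continuous. -/
structure GroupAction (H : Type*) [NormedAddCommGroup H] [NormedSpace ℂ H] where
  κ : ℝ → H ≃L[ℂ] H
  mul : ∀ ⦃l m : ℝ⦄, 0 < l → 0 < m → ∀ h : H, κ l (κ m h) = κ (l * m) h
  strong_cont : ∀ h : H, ContinuousOn (fun l => κ l h) (Set.Ioi (0 : ℝ))

namespace GroupAction
variable {H : Type*} [NormedAddCommGroup H] [NormedSpace ℂ H]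

lemma kappa_one (ga : GroupAction H) (h : H) : ga.κ 1 h = h := by
  have h1 := ga.mul one_pos one_pos h
  rw [one_mul] at h1
  exact (ga.κ 1).injective h1

lemma symm_apply (ga : GroupAction H) {t : ℝ} (ht : 0 < t) (h : H) :
    (ga.κ t).symm h = ga.κ t⁻¹ h := by
  rw [ContinuousLinearEquiv.symm_apply_eq, ga.mul ht (inv_pos.2 ht),
    mul_inv_cancel₀ ht.ne', ga.kappa_one]

lemma exists_bound [CompleteSpace H] (ga : GroupAction H) :
    ∃ c ≥ (1:ℝ), ∃ M ≥ (0:ℝ), ∀ ⦃t : ℝ⦄, 0 < t → ∀ h : H,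
      ‖ga.κ t h‖ ≤ c * (max t t⁻¹) ^ M * ‖h‖ := by
  -- uniform bound on [1/2, 2] via Banach-Steinhaus
  obtain ⟨c₀', hc₀'⟩ : ∃ C', ∀ i : Set.Icc (2⁻¹:ℝ) 2, ‖((ga.κ i.1).toContinuousLinearMap)‖ ≤ C' := by
    apply banach_steinhaus
    intro x
    have hcont : ContinuousOn (fun l => ga.κ l x) (Set.Icc (2⁻¹:ℝ) 2) :=
      (ga.strong_cont x).mono (fun y hy => lt_of_lt_of_le (by norm_num) hy.1)
    obtain ⟨C, hC⟩ := (isCompact_Icc).exists_bound_of_continuousOn hcont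
    exact ⟨C, fun i => hC i.1 i.2⟩
  set c₀ : ℝ := max c₀' 1 with hc₀def
  have hc₀1 : (1:ℝ) ≤ c₀ := le_max_right _ _
  have hc₀0 : (0:ℝ) < c₀ := lt_of_lt_of_le one_pos hc₀1
  have hIcc : ∀ ⦃t : ℝ⦄, (2⁻¹:ℝ) ≤ t → t ≤ 2 → ∀ h : H, ‖ga.κ t h‖ ≤ c₀ * ‖h‖ := by
    intro t h1 h2 h
    calc ‖ga.κ t h‖ ≤ ‖(ga.κ t).toContinuousLinearMap‖ * ‖h‖ :=
          (ga.κ t).toContinuousLinearMap.le_opNorm h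
    _ ≤ c₀ * ‖h‖ := by
          apply mul_le_mul_of_nonneg_right _ (norm_nonneg h)
          exact le_trans (hc₀' ⟨t, h1, h2⟩) (le_max_left _ _)
  -- dyadic induction
  have key : ∀ n : ℕ, ∀ t : ℝ, (2:ℝ)⁻¹ ^ (n+1) ≤ t → t ≤ 2 ^ (n+1) → ∀ h : H,
      ‖ga.κ t h‖ ≤ c₀ ^ (n+1) * ‖h‖ := by
    intro n
    induction n with
    | zero => intro t h1 h2 h; simpa using hIcc (by simpa using h1) (by simpa using h2) h
    | succ n ih =>
      intro t h1 h2 h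
      have ht0 : 0 < t := lt_of_lt_of_le (by positivity) h1
      have h2n : (2:ℝ) ≤ 2 ^ (n+1) := by
        calc (2:ℝ) = 2 ^ 1 := (pow_one 2).symm
        _ ≤ 2 ^ (n+1) := pow_le_pow_right₀ (by norm_num) (by omega)
      have hin : (2:ℝ)⁻¹ ^ (n+1) ≤ 2⁻¹ := by
        calc (2:ℝ)⁻¹ ^ (n+1) ≤ 2⁻¹ ^ 1 := pow_le_pow_of_le_one (by norm_num) (by norm_num) (by omega)
        _ = 2⁻¹ := pow_one _
      rcases le_or_gt t (2 ^ (n+1)) with h2' | h2'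
      · rcases le_or_gt ((2:ℝ)⁻¹ ^ (n+1)) t with h1' | h1'
        · have := ih t h1' h2' h
          refine le_trans this (mul_le_mul_of_nonneg_right ?_ (norm_nonneg h))
          exact pow_le_pow_right₀ hc₀1 (by omega)
        · -- t < (1/2)^(n+1) : κ t h = κ (1/2) (κ (2t) h)
          have e : ga.κ 2⁻¹ (ga.κ (2*t) h) = ga.κ t h := by
            rw [ga.mul (by norm_num) (by positivity)]; ring_nf
          rw [← e]
          have step1 : ‖ga.κ 2⁻¹ (ga.κ (2*t) h)‖ ≤ c₀ * ‖ga.κ (2*t) h‖ :=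
            hIcc (by norm_num) (by norm_num) _
          have step2 : ‖ga.κ (2*t) h‖ ≤ c₀ ^ (n+1) * ‖h‖ := by
            apply ih (2*t)
            · have : (2:ℝ)⁻¹ ^ (n+1) = 2 * (2:ℝ)⁻¹ ^ (n+1+1) := by ring
              rw [this]; linarith
            · nlinarith
          calc ‖ga.κ 2⁻¹ (ga.κ (2*t) h)‖ ≤ c₀ * (c₀ ^ (n+1) * ‖h‖) :=
                le_trans step1 (mul_le_mul_of_nonneg_left step2 (le_of_lt hc₀0))
          _ = c₀ ^ (n+1+1) * ‖h‖ := by ring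
      · -- t > 2^(n+1) : κ t h = κ 2 (κ (t/2) h)
        have e : ga.κ 2 (ga.κ (t/2) h) = ga.κ t h := by
          rw [ga.mul (by norm_num) (by positivity)]; ring_nf
        rw [← e]
        have step1 : ‖ga.κ 2 (ga.κ (t/2) h)‖ ≤ c₀ * ‖ga.κ (t/2) h‖ :=
          hIcc (by norm_num) (by norm_num) _
        have step2 : ‖ga.κ (t/2) h‖ ≤ c₀ ^ (n+1) * ‖h‖ := by
          apply ih (t/2)
          · nlinarith
          · have : (2:ℝ) ^ (n+1+1) = 2 * 2 ^ (n+1) := by ring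
            rw [this] at h2; linarith
        calc ‖ga.κ 2 (ga.κ (t/2) h)‖ ≤ c₀ * (c₀ ^ (n+1) * ‖h‖) :=
              le_trans step1 (mul_le_mul_of_nonneg_left step2 (le_of_lt hc₀0))
        _ = c₀ ^ (n+1+1) * ‖h‖ := by ring
  refine ⟨c₀, hc₀1, Real.logb 2 c₀, Real.logb_nonneg (by norm_num) hc₀1, ?_⟩
  intro t ht h
  set m : ℝ := max t t⁻¹ with hm
  have hm1 : 1 ≤ m := by
    rcases le_or_gt 1 t with h' | h'
    · exact le_trans h' (le_max_left _ _)
    · exact le_trans (one_le_inv_iff₀.2 ⟨ht, h'.le⟩) (le_max_right _ _)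
  have hm0 : 0 < m := lt_of_lt_of_le one_pos hm1
  set n : ℕ := ⌊Real.logb 2 m⌋₊ with hn
  have hlogb0 : 0 ≤ Real.logb 2 m := Real.logb_nonneg (by norm_num) hm1
  have hmle : m ≤ 2 ^ (n+1) := by
    have h1 : Real.logb 2 m < (n:ℝ) + 1 := Nat.lt_floor_add_one _
    have h2 := Real.rpow_le_rpow_of_exponent_le (by norm_num : (1:ℝ) ≤ 2) h1.le
    rw [Real.rpow_logb (by norm_num) (by norm_num) hm0] at h2
    calc m ≤ (2:ℝ) ^ ((n:ℝ)+1) := h2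
    _ = (2:ℝ) ^ (((n+1:ℕ)):ℝ) := by push_cast; ring_nf
    _ = 2 ^ (n+1) := by rw [Real.rpow_natCast]
  have hmt : t ≤ m := le_max_left _ _
  have hminv : m⁻¹ ≤ t := by
    rw [inv_le_comm₀ hm0 ht]
    exact le_max_right _ _
  have hlo : (2:ℝ)⁻¹ ^ (n+1) ≤ t := by
    refine le_trans ?_ hminv
    rw [inv_pow]
    exact inv_anti₀ hm0 hmle
  have hb := key n t hlo (le_trans hmt hmle) h
  refine le_trans hb (mul_le_mul_of_nonneg_right ?_ (norm_nonneg h))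
  have h1 : (c₀:ℝ) ^ (n+1) = c₀ ^ (n:ℝ) * c₀ := by
    rw [← Real.rpow_natCast c₀ (n+1)]
    push_cast
    rw [Real.rpow_add hc₀0, Real.rpow_one]
  rw [h1]
  have h2 : c₀ ^ (n:ℝ) ≤ c₀ ^ Real.logb 2 m :=
    Real.rpow_le_rpow_of_exponent_le hc₀1 (Nat.floor_le hlogb0)
  have h3 : c₀ ^ Real.logb 2 m = m ^ Real.logb 2 c₀ := by
    rw [Real.rpow_def_of_pos hc₀0, Real.rpow_def_of_pos hm0, Real.logb, Real.logb]
    ring_nf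
  calc c₀ ^ (n:ℝ) * c₀ ≤ c₀ ^ Real.logb 2 m * c₀ :=
        mul_le_mul_of_nonneg_right h2 (le_of_lt hc₀0)
  _ = c₀ * m ^ Real.logb 2 c₀ := by rw [h3]; ring

/-- Joint continuity of `x ↦ κ (f x) (g x)`. -/
lemma continuous_apply₂ [CompleteSpace H] (ga : GroupAction H) {X : Type*} [TopologicalSpace X]
    {f : X → ℝ} {g : X → H} (hf : Continuous f) (hfpos : ∀ x, 0 < f x) (hg : Continuous g) :
    Continuous fun x => ga.κ (f x) (g x) := by
  obtain ⟨c, hc1, M, hM0, hbound⟩ := ga.exists_bound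
  rw [continuous_iff_continuousAt]
  intro x₀
  have hdecomp : ∀ x, ga.κ (f x) (g x) = ga.κ (f x) (g x - g x₀) + ga.κ (f x) (g x₀) := by
    intro x
    rw [map_sub, sub_add_cancel]
  have h2 : Filter.Tendsto (fun x => ga.κ (f x) (g x₀)) (nhds x₀) (nhds (ga.κ (f x₀) (g x₀))) := by
    have hcont : ContinuousAt (fun l => ga.κ l (g x₀)) (f x₀) :=
      (ga.strong_cont (g x₀)).continuousAt (Ioi_mem_nhds (hfpos x₀))
    exact hcont.comp hf.continuousAt
  have h1 : Filter.Tendsto (fun x => ga.κ (f x) (g x - g x₀)) (nhds x₀) (nhds 0) := by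
    apply squeeze_zero_norm (fun x => hbound (hfpos x) _)
    · have hb : Continuous fun x => c * (max (f x) (f x)⁻¹) ^ M * ‖g x - g x₀‖ := by
        apply Continuous.mul
        · apply Continuous.mul continuous_const
          apply Continuous.rpow_const
          · exact Continuous.max hf (Continuous.inv₀ hf (fun x => (hfpos x).ne'))
          · intro x
            left
            have : 0 < max (f x) (f x)⁻¹ := lt_of_lt_of_le (hfpos x) (le_max_left _ _)
            exact this.ne'
        · exact (hg.sub continuous_const).norm
      have := hb.continuousAt (x := x₀)
      simpa [ContinuousAt, sub_self] using this
  have hsum := h1.add h2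
  rw [zero_add] at hsum
  exact hsum.congr (fun x => (hdecomp x).symm)

end GroupAction

section JapLemmas
variable {q : ℕ}

lemma jap_pos (η : Eucl q) : 0 < jap η := Real.sqrt_pos.2 (by positivity)

lemma one_le_jap (η : Eucl q) : 1 ≤ jap η := by
  rw [show (1:ℝ) = Real.sqrt 1 from (Real.sqrt_one).symm]
  apply Real.sqrt_le_sqrt
  nlinarith [sq_nonneg ‖η‖]

lemma jap_sub_comm (η ζ : Eucl q) : jap (η - ζ) = jap (ζ - η) := by
  unfold jap
  rw [norm_sub_rev]

lemma jap_le_one_add (η : Eucl q) : jap η ≤ 1 + ‖η‖ := by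
  unfold jap
  rw [show (1:ℝ) + ‖η‖ = Real.sqrt ((1 + ‖η‖)^2) by
    rw [Real.sqrt_sq (by positivity)]]
  apply Real.sqrt_le_sqrt
  nlinarith [norm_nonneg η]

/-- Peetre's inequality. -/
lemma peetre (η ζ : Eucl q) : jap η ≤ Real.sqrt 2 * (jap ζ * jap (η - ζ)) := by
  unfold jap
  rw [← Real.sqrt_mul (show (0:ℝ) ≤ 1 + ‖ζ‖^2 by positivity) (1 + ‖η - ζ‖^2),
    ← Real.sqrt_mul (by norm_num : (0:ℝ) ≤ 2) ((1 + ‖ζ‖^2) * (1 + ‖η - ζ‖^2))]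
  apply Real.sqrt_le_sqrt
  have h : ‖η‖ ≤ ‖ζ‖ + ‖η - ζ‖ := by
    calc ‖η‖ = ‖ζ + (η - ζ)‖ := by rw [add_sub_cancel]
    _ ≤ ‖ζ‖ + ‖η - ζ‖ := norm_add_le _ _
  nlinarith [norm_nonneg η, norm_nonneg ζ, norm_nonneg (η - ζ), sq_nonneg (‖ζ‖*‖η-ζ‖),
    sq_nonneg (‖ζ‖ - ‖η-ζ‖), sq_nonneg (‖ζ‖ + ‖η-ζ‖)]

lemma sqrt_two_rpow (M : ℝ) : Real.sqrt 2 ^ M = (2:ℝ) ^ (M/2) := by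
  rw [show Real.sqrt 2 = (2:ℝ) ^ ((1:ℝ)/2) from Real.sqrt_eq_rpow 2, ← Real.rpow_mul (by norm_num)]
  ring_nf

/-- Weight comparison: `⟨η⟩^s ≤ 2^(|s|/2) ⟨ζ⟩^s ⟨η-ζ⟩^|s|`. -/
lemma jap_rpow_le (s : ℝ) (η ζ : Eucl q) :
    jap η ^ s ≤ 2 ^ (|s|/2) * (jap ζ ^ s * jap (η - ζ) ^ |s|) := by
  rcases le_or_gt 0 s with hs | hs
  · rw [_root_.abs_of_nonneg hs]
    calc jap η ^ s ≤ (Real.sqrt 2 * (jap ζ * jap (η - ζ))) ^ s :=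
          Real.rpow_le_rpow (jap_pos η).le (peetre η ζ) hs
    _ = 2 ^ (s/2) * (jap ζ ^ s * jap (η - ζ) ^ s) := by
        rw [Real.mul_rpow (Real.sqrt_nonneg 2) (mul_nonneg (jap_pos ζ).le (jap_pos (η - ζ)).le),
          Real.mul_rpow (jap_pos ζ).le (jap_pos (η - ζ)).le, sqrt_two_rpow]
  · rw [_root_.abs_of_neg hs]
    have key : jap ζ ^ (-s) ≤ 2 ^ (-s/2) * (jap η ^ (-s) * jap (η - ζ) ^ (-s)) := by
      calc jap ζ ^ (-s) ≤ (Real.sqrt 2 * (jap η * jap (ζ - η))) ^ (-s) :=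
            Real.rpow_le_rpow (jap_pos ζ).le (peetre ζ η) (by linarith)
      _ = 2 ^ (-s/2) * (jap η ^ (-s) * jap (η - ζ) ^ (-s)) := by
          rw [Real.mul_rpow (Real.sqrt_nonneg 2) (mul_nonneg (jap_pos η).le (jap_pos (ζ - η)).le),
            Real.mul_rpow (jap_pos η).le (jap_pos (ζ - η)).le, sqrt_two_rpow,
            jap_sub_comm ζ η]
    -- divide: jap η ^ s = (jap η ^ (-s))⁻¹
    have hη := jap_pos η; have hζ := jap_pos ζ; have hd := jap_pos (η - ζ)
    have e1 : ∀ x : ℝ, 0 < x → x ^ s * x ^ (-s) = 1 := by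
      intro x hx
      rw [← Real.rpow_add hx]
      simp
    have step : jap η ^ s * jap ζ ^ (-s) ≤ 2 ^ (-s/2) * jap (η - ζ) ^ (-s) := by
      calc jap η ^ s * jap ζ ^ (-s) ≤ jap η ^ s * (2 ^ (-s/2) * (jap η ^ (-s) * jap (η - ζ) ^ (-s))) :=
            mul_le_mul_of_nonneg_left key (Real.rpow_nonneg hη.le s)
      _ = (jap η ^ s * jap η ^ (-s)) * (2 ^ (-s/2) * jap (η - ζ) ^ (-s)) := by ring
      _ = 2 ^ (-s/2) * jap (η - ζ) ^ (-s) := by rw [e1 _ hη, one_mul]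
    calc jap η ^ s = (jap η ^ s * jap ζ ^ (-s)) * jap ζ ^ s := by
          rw [mul_assoc, mul_comm (jap ζ ^ (-s)), e1 _ hζ, mul_one]
    _ ≤ (2 ^ (-s/2) * jap (η - ζ) ^ (-s)) * jap ζ ^ s :=
          mul_le_mul_of_nonneg_right step (Real.rpow_nonneg hζ.le s)
    _ = 2 ^ (-s/2) * (jap ζ ^ s * jap (η - ζ) ^ (-s)) := by ring

/-- Ratio bound: `max (⟨η⟩⁻¹⟨ζ⟩) (⟨η⟩⁻¹⟨ζ⟩)⁻¹ ≤ √2 ⟨η-ζ⟩`. -/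
lemma jap_ratio_le (η ζ : Eucl q) :
    max ((jap η)⁻¹ * jap ζ) ((jap η)⁻¹ * jap ζ)⁻¹ ≤ Real.sqrt 2 * jap (η - ζ) := by
  have hη := jap_pos η; have hζ := jap_pos ζ
  apply max_le
  · rw [inv_mul_le_iff₀ hη]
    calc jap ζ ≤ Real.sqrt 2 * (jap η * jap (ζ - η)) := peetre ζ η
    _ = jap η * (Real.sqrt 2 * jap (η - ζ)) := by rw [jap_sub_comm ζ η]; ring
  · rw [mul_inv, inv_inv]
    rw [mul_inv_le_iff₀ hζ]
    calc jap η ≤ Real.sqrt 2 * (jap ζ * jap (η - ζ)) := peetre η ζ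
    _ = Real.sqrt 2 * jap (η - ζ) * jap ζ := by ring

end JapLemmas

section FourierLemmas
open FourierTransform Real
variable {q : ℕ} {H : Type*} [NormedAddCommGroup H] [NormedSpace ℂ H]

lemma ft_eq (u : Eucl q → H) (η : Eucl q) :
    ft u η = 𝓕 u ((2 * π)⁻¹ • η) := by
  rw [Real.fourier_eq']
  unfold ft
  congr 1
  funext y
  congr 1
  have h1 : (inner ℝ y ((2 * π)⁻¹ • η) : ℝ) = (2 * π)⁻¹ * (inner ℝ y η : ℝ) :=
    real_inner_smul_right _ _ _
  rw [h1]
  have hπ : (2 * π) ≠ 0 := by positivity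
  have h2 : -2 * π * ((2 * π)⁻¹ * (inner ℝ y η : ℝ)) = -(inner ℝ y η : ℝ) := by
    generalize (inner ℝ y η : ℝ) = r
    field_simp
  rw [h2]
  set r : ℝ := (inner ℝ y η : ℝ)
  push_cast
  ring

variable [CompleteSpace H]

lemma ft_continuous {u : Eucl q → H} (hu : Integrable u) : Continuous (ft u) := by
  have h : Continuous (𝓕 u) :=
    VectorFourier.fourierIntegral_continuous Real.continuous_fourierChar continuous_inner hu
  have : Continuous fun η : Eucl q => (2 * π)⁻¹ • η := continuous_const_smul _
  have e : ft u = fun η => 𝓕 u ((2 * π)⁻¹ • η) := funext (ft_eq u)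
  rw [e]; exact h.comp this

lemma ft_norm_le {u : Eucl q → H} (η : Eucl q) : ‖ft u η‖ ≤ ∫ y, ‖u y‖ := by
  rw [ft_eq]
  exact VectorFourier.norm_fourierIntegral_le_integral_norm _ _ _ _ _

/-- The key convolution identity: `ft (φ·u) η = ∫ ξ, (𝓕 φ) ξ • ft u (η - 2π ξ) dξ`. -/
lemma ft_smul_eq (φ : SchwartzMap (Eucl q) ℂ) (u : SchwartzMap (Eucl q) H) (η : Eucl q) :
    ft (fun y => φ y • u y) η
      = ∫ ξ, (SchwartzMap.fourierTransformCLM ℂ φ) ξ • ft (⇑u) (η - (2 * π) • ξ) := by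
  set ψ := SchwartzMap.fourierTransformCLM ℂ φ with hψ
  have hψφ : ⇑ψ = 𝓕 ⇑φ := rfl
  -- inversion
  have hinv : ∀ y, φ y = ∫ ξ, Complex.exp (((2 * π * (inner ℝ ξ y : ℝ) : ℝ) : ℂ) * Complex.I) * ψ ξ := by
    intro y
    have h1 : 𝓕⁻ (𝓕 ⇑φ) = ⇑φ :=
      Continuous.fourierInv_fourier_eq φ.continuous φ.integrable
        (by rw [← hψφ]; exact ψ.integrable)
    have h2 := Real.fourierInv_eq' (𝓕 ⇑φ) y
    rw [h1] at h2
    rw [h2, ← hψφ]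
    simp only [smul_eq_mul]
  -- the exponential combination
  have hexp : ∀ (ξ y : Eucl q),
      Complex.exp (-Complex.I * ((inner ℝ y η : ℝ) : ℂ)) *
        Complex.exp (((2 * π * (inner ℝ ξ y : ℝ) : ℝ) : ℂ) * Complex.I)
      = Complex.exp (-Complex.I * ((inner ℝ y (η - (2 * π) • ξ) : ℝ) : ℂ)) := by
    intro ξ y
    rw [← Complex.exp_add]
    congr 1
    have : (inner ℝ y (η - (2 * π) • ξ) : ℝ) = (inner ℝ y η : ℝ) - 2 * π * (inner ℝ ξ y : ℝ) := by
      rw [inner_sub_right, real_inner_smul_right, real_inner_comm ξ y]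
      try ring
    rw [this]
    push_cast
    try ring
  -- integrability on the product
  have hint : Integrable (Function.uncurry fun ξ y =>
      (Complex.exp (-Complex.I * ((inner ℝ y (η - (2 * π) • ξ) : ℝ) : ℂ)) * ψ ξ) • u y)
      (volume.prod volume) := by
    have hmeas : AEStronglyMeasurable (Function.uncurry fun ξ y =>
        (Complex.exp (-Complex.I * ((inner ℝ y (η - (2 * π) • ξ) : ℝ) : ℂ)) * ψ ξ) • u y)
        (volume.prod volume) := by
      apply Continuous.aestronglyMeasurable
      apply Continuous.smul
      · apply Continuous.mul
        · apply Complex.continuous_exp.comp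
          apply Continuous.mul continuous_const
          apply Complex.continuous_ofReal.comp
          exact continuous_inner.comp ((continuous_snd).prodMk
            (continuous_const.sub (continuous_const_smul _ |>.comp continuous_fst)))
        · exact ψ.continuous.comp continuous_fst
      · exact u.continuous.comp continuous_snd
    apply Integrable.mono' ((ψ.integrable.norm).mul_prod (u.integrable.norm)) hmeas
    filter_upwards with p
    simp only [Function.uncurry]
    have hnorm : ‖Complex.exp (-Complex.I * ((inner ℝ p.2 (η - (2 * π) • p.1) : ℝ) : ℂ))‖ = 1 := by
      rw [Complex.norm_exp]
      simp
    rw [norm_smul, norm_mul, hnorm, one_mul]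
  -- main computation
  have step1 : ft (fun y => φ y • u y) η
      = ∫ y, ∫ ξ, (Complex.exp (-Complex.I * ((inner ℝ y (η - (2 * π) • ξ) : ℝ) : ℂ)) * ψ ξ) • u y := by
    unfold ft
    congr 1
    funext y
    rw [smul_smul, hinv y, ← integral_const_mul, ← integral_smul_const]
    congr 1
    funext ξ
    rw [← mul_assoc, hexp ξ y]
  rw [step1, ← integral_integral_swap hint]
  congr 1
  funext ξ
  have : ∀ y : Eucl q, (Complex.exp (-Complex.I * ((inner ℝ y (η - (2 * π) • ξ) : ℝ) : ℂ)) * ψ ξ) • u y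
      = ψ ξ • (Complex.exp (-Complex.I * ((inner ℝ y (η - (2 * π) • ξ) : ℝ) : ℂ)) • u y) := by
    intro y
    rw [smul_smul, mul_comm]
  simp only [this]
  rw [integral_smul]
  rfl

end FourierLemmas

/-- Multiplication by a scalar Schwartz function `φ` is bounded on `𝒲^s(ℝ^q, H)`:
there is `C > 0` with `‖φ·u‖_{𝒲^s} ≤ C ‖u‖_{𝒲^s}` for all Schwartz `u` (stated with squared
norms). -/
theorem stmt10 {q : ℕ} (H : Type*) [NormedAddCommGroup H] [InnerProductSpace ℂ H]
    [CompleteSpace H] (ga : GroupAction H) (s : ℝ) (φ : SchwartzMap (Eucl q) ℂ) :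
    ∃ C > (0 : ℝ), ∀ u : SchwartzMap (Eucl q) H,
      (∫⁻ η, ENNReal.ofReal (jap η ^ (2 * s)) *
          ((‖(ga.κ (jap η)).symm (ft (fun y => φ y • u y) η)‖₊ : ℝ≥0∞) ^ 2))
        ≤ ENNReal.ofReal (C ^ 2) *
          (∫⁻ η, ENNReal.ofReal (jap η ^ (2 * s)) *
            ((‖(ga.κ (jap η)).symm (ft (⇑u) η)‖₊ : ℝ≥0∞) ^ 2)) := by
  classical
  obtain ⟨c, hc1, M, hM0, hbound⟩ := ga.exists_bound
  have hc0 : (0:ℝ) < c := lt_of_lt_of_le one_pos hc1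
  set ψ := SchwartzMap.fourierTransformCLM ℂ φ with hψ
  set N : ℝ := M + |s| with hN
  have hN0 : 0 ≤ N := add_nonneg hM0 (abs_nonneg s)
  set c₁ : ℝ := c * 2 ^ (N / 2) with hc₁
  have hc₁0 : 0 < c₁ := mul_pos hc0 (Real.rpow_pos_of_pos two_pos _)
  set K : Eucl q → ℝ≥0∞ :=
    fun ξ => ENNReal.ofReal (c₁ * ‖ψ ξ‖ * jap ((2 * Real.pi) • ξ) ^ N) with hK
  have hjap_cont : Continuous fun η : Eucl q => jap η := by
    unfold jap
    exact Real.continuous_sqrt.comp (continuous_const.add (continuous_norm.pow 2))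
  have hK_meas : Measurable K := by
    apply ENNReal.measurable_ofReal.comp
    apply Measurable.mul
    · exact (continuous_const.mul ψ.continuous.norm).measurable
    · apply Continuous.measurable
      apply Continuous.rpow_const
      · exact hjap_cont.comp (continuous_const_smul _)
      · exact fun ξ => Or.inl (jap_pos _).ne'
  set A : ℝ≥0∞ := ∫⁻ ξ, K ξ with hA
  -- A is finite
  have hA_ne : A ≠ ⊤ := by
    set k : ℕ := ⌈N⌉₊ + (q + 1) with hk
    set D : ℝ := 2 ^ k * ((Finset.Iic (k, 0)).sup (schwartzSeminormFamily ℝ (Eucl q) ℂ)) ψ with hD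
    have hD_bound : ∀ ξ : Eucl q, (1 + ‖ξ‖) ^ k * ‖ψ ξ‖ ≤ D := by
      intro ξ
      have h := SchwartzMap.one_add_le_sup_seminorm_apply (𝕜 := ℝ) (m := (k, 0))
        le_rfl le_rfl ψ ξ
      rwa [norm_iteratedFDeriv_zero] at h
    set E : ℝ := c₁ * (7 ^ N * D) with hE
    have hpt : ∀ ξ : Eucl q, c₁ * ‖ψ ξ‖ * jap ((2 * Real.pi) • ξ) ^ N
        ≤ E * (1 + ‖ξ‖) ^ (-((q:ℝ) + 1)) := by
      intro ξ
      have h1ξ : (0:ℝ) < 1 + ‖ξ‖ := by positivity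
      have hjb : jap ((2 * Real.pi) • ξ) ≤ 7 * (1 + ‖ξ‖) := by
        calc jap ((2 * Real.pi) • ξ) ≤ 1 + ‖(2 * Real.pi) • ξ‖ := jap_le_one_add _
        _ = 1 + 2 * Real.pi * ‖ξ‖ := by
            rw [norm_smul, Real.norm_eq_abs, abs_of_pos (by positivity)]
        _ ≤ 7 * (1 + ‖ξ‖) := by nlinarith [Real.pi_lt_d2, norm_nonneg ξ]
      have hjbN : jap ((2 * Real.pi) • ξ) ^ N ≤ 7 ^ N * (1 + ‖ξ‖) ^ (⌈N⌉₊ : ℝ) := by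
        calc jap ((2 * Real.pi) • ξ) ^ N ≤ (7 * (1 + ‖ξ‖)) ^ N :=
              Real.rpow_le_rpow (jap_pos _).le hjb hN0
        _ = 7 ^ N * (1 + ‖ξ‖) ^ N := Real.mul_rpow (by norm_num) h1ξ.le
        _ ≤ 7 ^ N * (1 + ‖ξ‖) ^ (⌈N⌉₊ : ℝ) := by
            apply mul_le_mul_of_nonneg_left _ (Real.rpow_nonneg (by norm_num) N)
            exact Real.rpow_le_rpow_of_exponent_le (by linarith [norm_nonneg ξ]) (Nat.le_ceil N)
      have hsplit : ‖ψ ξ‖ * (1 + ‖ξ‖) ^ (⌈N⌉₊:ℝ) ≤ D * (1 + ‖ξ‖) ^ (-((q:ℝ)+1)) := by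
        have e1 : (1 + ‖ξ‖) ^ (⌈N⌉₊:ℝ) = (1 + ‖ξ‖) ^ (k:ℝ) * (1 + ‖ξ‖) ^ (-((q:ℝ)+1)) := by
          rw [← Real.rpow_add h1ξ]
          congr 1
          rw [hk]; push_cast; ring
        rw [e1, ← mul_assoc]
        apply mul_le_mul_of_nonneg_right _ (Real.rpow_nonneg h1ξ.le _)
        rw [Real.rpow_natCast]
        calc ‖ψ ξ‖ * (1 + ‖ξ‖) ^ k = (1 + ‖ξ‖) ^ k * ‖ψ ξ‖ := mul_comm _ _
        _ ≤ D := hD_bound ξ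
      calc c₁ * ‖ψ ξ‖ * jap ((2 * Real.pi) • ξ) ^ N
          ≤ c₁ * ‖ψ ξ‖ * (7 ^ N * (1 + ‖ξ‖) ^ (⌈N⌉₊:ℝ)) := by
            apply mul_le_mul_of_nonneg_left hjbN (by positivity)
      _ = c₁ * 7 ^ N * (‖ψ ξ‖ * (1 + ‖ξ‖) ^ (⌈N⌉₊:ℝ)) := by ring
      _ ≤ c₁ * 7 ^ N * (D * (1 + ‖ξ‖) ^ (-((q:ℝ)+1))) := by
            apply mul_le_mul_of_nonneg_left hsplit (by positivity)
      _ = E * (1 + ‖ξ‖) ^ (-((q:ℝ)+1)) := by rw [hE]; ring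
    have hint : Integrable (fun ξ : Eucl q => (1 + ‖ξ‖) ^ (-((q:ℝ)+1))) volume := by
      apply integrable_one_add_norm
      rw [finrank_euclideanSpace_fin]
      linarith
    have hfin : (∫⁻ ξ : Eucl q, ENNReal.ofReal (E * (1 + ‖ξ‖) ^ (-((q:ℝ)+1)))) < ⊤ := by
      calc (∫⁻ ξ : Eucl q, ENNReal.ofReal (E * (1 + ‖ξ‖) ^ (-((q:ℝ)+1))))
          ≤ ∫⁻ ξ : Eucl q, (‖E * (1 + ‖ξ‖) ^ (-((q:ℝ)+1))‖₊ : ℝ≥0∞) := by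
            apply lintegral_mono
            intro ξ
            exact Real.ofReal_le_enorm _
      _ < ⊤ := (hint.const_mul E).hasFiniteIntegral
    have hle : A ≤ ∫⁻ ξ : Eucl q, ENNReal.ofReal (E * (1 + ‖ξ‖) ^ (-((q:ℝ)+1))) := by
      rw [hA]
      apply lintegral_mono
      intro ξ
      exact ENNReal.ofReal_le_ofReal (hpt ξ)
    exact (lt_of_le_of_lt hle hfin).ne
  refine ⟨max A.toReal 1, lt_of_lt_of_le one_pos (le_max_right _ _), ?_⟩
  intro u
  set w : Eucl q → H := fun ζ => (ga.κ (jap ζ)).symm (ft (⇑u) ζ) with hw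
  set G : Eucl q → ℝ≥0∞ := fun ζ => ENNReal.ofReal (jap ζ ^ s) * (‖w ζ‖₊ : ℝ≥0∞) with hG
  set F : Eucl q → ℝ≥0∞ := fun η =>
    ENNReal.ofReal (jap η ^ s) *
      (‖(ga.κ (jap η)).symm (ft (fun y => φ y • u y) η)‖₊ : ℝ≥0∞) with hF
  have hsq : ∀ (a : ℝ) (x : H), 0 < a → ENNReal.ofReal (a ^ (2*s)) * (‖x‖₊ : ℝ≥0∞)^2
      = (ENNReal.ofReal (a ^ s) * (‖x‖₊ : ℝ≥0∞))^2 := by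
    intro a x ha
    have h2 : a ^ (2*s) = (a ^ s) ^ (2:ℕ) := by
      rw [← Real.rpow_natCast (a ^ s) 2, ← Real.rpow_mul ha.le]
      norm_num [mul_comm]
    rw [h2, ENNReal.ofReal_pow (Real.rpow_nonneg ha.le s), mul_pow]
  -- continuity / measurability of G
  have hw_cont : Continuous w := by
    have heq : w = fun ζ => ga.κ ((jap ζ)⁻¹) (ft (⇑u) ζ) :=
      funext fun ζ => ga.symm_apply (jap_pos ζ) _
    rw [heq]
    exact ga.continuous_apply₂ (hjap_cont.inv₀ fun ζ => (jap_pos ζ).ne')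
      (fun ζ => inv_pos.2 (jap_pos ζ)) (ft_continuous u.integrable)
  have hG_meas : Measurable G := by
    apply Measurable.fun_mul
    · apply ENNReal.measurable_ofReal.comp
      exact (hjap_cont.rpow_const fun ζ => Or.inl (jap_pos ζ).ne').measurable
    · exact hw_cont.nnnorm.measurable.coe_nnreal_ennreal
  -- pointwise convolution bound
  have claim1 : ∀ η, F η ≤ ∫⁻ ξ, K ξ * G (η - (2 * Real.pi) • ξ) := by
    intro η
    have hfteq : (ga.κ (jap η)).symm (ft (fun y => φ y • u y) η)
        = ∫ ξ, ψ ξ • (ga.κ (jap η)).symm (ft (⇑u) (η - (2 * Real.pi) • ξ)) := by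
      rw [ft_smul_eq φ u η, ← ContinuousLinearEquiv.integral_comp_comm]
      congr 1
      funext ξ
      exact map_smul _ _ _
    calc F η = ENNReal.ofReal (jap η ^ s) *
          (‖∫ ξ, ψ ξ • (ga.κ (jap η)).symm (ft (⇑u) (η - (2 * Real.pi) • ξ))‖₊ : ℝ≥0∞) := by
          simp only [hF]
          rw [hfteq]
    _ ≤ ENNReal.ofReal (jap η ^ s) *
          ∫⁻ ξ, (‖ψ ξ • (ga.κ (jap η)).symm (ft (⇑u) (η - (2 * Real.pi) • ξ))‖₊ : ℝ≥0∞) :=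
        mul_le_mul_right (enorm_integral_le_lintegral_enorm _) _
    _ = ∫⁻ ξ, ENNReal.ofReal (jap η ^ s) *
          (‖ψ ξ • (ga.κ (jap η)).symm (ft (⇑u) (η - (2 * Real.pi) • ξ))‖₊ : ℝ≥0∞) :=
        (lintegral_const_mul' _ _ ENNReal.ofReal_ne_top).symm
    _ ≤ ∫⁻ ξ, K ξ * G (η - (2 * Real.pi) • ξ) := by
        apply lintegral_mono
        intro ξ
        set ζ : Eucl q := η - (2 * Real.pi) • ξ with hζ
        have hsub : η - ζ = (2 * Real.pi) • ξ := by rw [hζ]; abel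
        have hft2 : ft (⇑u) ζ = ga.κ (jap ζ) (w ζ) := ((ga.κ (jap ζ)).apply_symm_apply _).symm
        have hcomp : (ga.κ (jap η)).symm (ft (⇑u) ζ) = ga.κ ((jap η)⁻¹ * jap ζ) (w ζ) := by
          rw [hft2, ga.symm_apply (jap_pos η), ga.mul (inv_pos.2 (jap_pos η)) (jap_pos ζ)]
        have hXle : ‖(ga.κ (jap η)).symm (ft (⇑u) ζ)‖
            ≤ c * (2 ^ (M/2) * jap ((2 * Real.pi) • ξ) ^ M) * ‖w ζ‖ := by
          rw [hcomp]
          refine le_trans (hbound (mul_pos (inv_pos.2 (jap_pos η)) (jap_pos ζ)) _) ?_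
          apply mul_le_mul_of_nonneg_right _ (norm_nonneg _)
          apply mul_le_mul_of_nonneg_left _ hc0.le
          calc (max ((jap η)⁻¹ * jap ζ) ((jap η)⁻¹ * jap ζ)⁻¹) ^ M
              ≤ (Real.sqrt 2 * jap (η - ζ)) ^ M := by
                apply Real.rpow_le_rpow _ (jap_ratio_le η ζ) hM0
                exact le_trans (mul_pos (inv_pos.2 (jap_pos η)) (jap_pos ζ)).le (le_max_left _ _)
          _ = 2 ^ (M/2) * jap ((2 * Real.pi) • ξ) ^ M := by
                rw [Real.mul_rpow (Real.sqrt_nonneg 2) (jap_pos _).le, sqrt_two_rpow, hsub]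
        have hreal : jap η ^ s * ‖ψ ξ • (ga.κ (jap η)).symm (ft (⇑u) ζ)‖
            ≤ (c₁ * ‖ψ ξ‖ * jap ((2 * Real.pi) • ξ) ^ N) * (jap ζ ^ s * ‖w ζ‖) := by
          rw [norm_smul]
          have hjs := jap_rpow_le s η ζ
          rw [hsub] at hjs
          calc jap η ^ s * (‖ψ ξ‖ * ‖(ga.κ (jap η)).symm (ft (⇑u) ζ)‖)
              ≤ jap η ^ s *
                  (‖ψ ξ‖ * (c * (2 ^ (M/2) * jap ((2 * Real.pi) • ξ) ^ M) * ‖w ζ‖)) := by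
                apply mul_le_mul_of_nonneg_left _ (Real.rpow_nonneg (jap_pos η).le s)
                exact mul_le_mul_of_nonneg_left hXle (norm_nonneg _)
          _ ≤ (2 ^ (|s|/2) * (jap ζ ^ s * jap ((2 * Real.pi) • ξ) ^ |s|)) *
                  (‖ψ ξ‖ * (c * (2 ^ (M/2) * jap ((2 * Real.pi) • ξ) ^ M) * ‖w ζ‖)) := by
                apply mul_le_mul_of_nonneg_right hjs
                have h1 : (0:ℝ) ≤ jap ((2 * Real.pi) • ξ) ^ M := Real.rpow_nonneg (jap_pos _).le M
                have h2 : (0:ℝ) ≤ (2:ℝ) ^ (M/2) := Real.rpow_nonneg (by norm_num) _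
                positivity
          _ = (c₁ * ‖ψ ξ‖ * jap ((2 * Real.pi) • ξ) ^ N) * (jap ζ ^ s * ‖w ζ‖) := by
                rw [hc₁, hN,
                  show (2:ℝ) ^ ((M + |s|)/2) = 2 ^ (|s|/2) * 2 ^ (M/2) by
                    rw [← Real.rpow_add two_pos]; ring_nf,
                  show jap ((2 * Real.pi) • ξ) ^ (M + |s|)
                      = jap ((2 * Real.pi) • ξ) ^ |s| * jap ((2 * Real.pi) • ξ) ^ M by
                    rw [← Real.rpow_add (jap_pos _)]; ring_nf]
                ring
        calc ENNReal.ofReal (jap η ^ s) *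
              (‖ψ ξ • (ga.κ (jap η)).symm (ft (⇑u) ζ)‖₊ : ℝ≥0∞)
            = ENNReal.ofReal (jap η ^ s * ‖ψ ξ • (ga.κ (jap η)).symm (ft (⇑u) ζ)‖) := by
              rw [ENNReal.ofReal_mul (Real.rpow_nonneg (jap_pos η).le s),
                ofReal_norm, enorm_eq_nnnorm]
        _ ≤ ENNReal.ofReal ((c₁ * ‖ψ ξ‖ * jap ((2 * Real.pi) • ξ) ^ N) * (jap ζ ^ s * ‖w ζ‖)) :=
              ENNReal.ofReal_le_ofReal hreal
        _ = K ξ * G ζ := by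
              simp only [hK, hG]
              rw [ENNReal.ofReal_mul
                  (mul_nonneg (mul_nonneg hc₁0.le (norm_nonneg _))
                    (Real.rpow_nonneg (jap_pos _).le _)),
                ENNReal.ofReal_mul (Real.rpow_nonneg (jap_pos ζ).le s),
                ofReal_norm, enorm_eq_nnnorm]
  -- Cauchy-Schwarz
  set B : ℝ≥0∞ := ∫⁻ ζ, G ζ ^ 2 with hB
  have hKne : ∀ ξ, K ξ ≠ ⊤ := by
    intro ξ
    simp only [hK]
    exact ENNReal.ofReal_ne_top
  have hhalf : ∀ x : ℝ≥0∞, x ^ ((1:ℝ)/2) * x ^ ((1:ℝ)/2) = x := by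
    intro x
    rw [← ENNReal.rpow_add_of_nonneg _ _ (by norm_num) (by norm_num)]
    norm_num
  have e2 : ∀ x : ℝ≥0∞, (x ^ ((1:ℝ)/2)) ^ (2:ℕ) = x := by
    intro x
    rw [sq, hhalf]
  have hsq2 : ∀ x : ℝ≥0∞, x ^ (2:ℝ) = x ^ (2:ℕ) := by
    intro x
    rw [← ENNReal.rpow_natCast]
    norm_num
  have claim2 : ∀ η, (∫⁻ ξ, K ξ * G (η - (2 * Real.pi) • ξ)) ^ 2
      ≤ A * ∫⁻ ξ, K ξ * G (η - (2 * Real.pi) • ξ) ^ 2 := by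
    intro η
    have hmeasg : Measurable fun ξ : Eucl q => G (η - (2 * Real.pi) • ξ) :=
      hG_meas.comp (measurable_const.sub (measurable_id.fun_const_smul _))
    have hH := ENNReal.lintegral_mul_le_Lp_mul_Lq volume
      (Real.HolderConjugate.two_two : Real.HolderConjugate 2 2)
      ((hK_meas.pow_const ((1:ℝ)/2)).aemeasurable)
      (((hK_meas.pow_const ((1:ℝ)/2)).fun_mul hmeasg).aemeasurable)
    have hfg : ∀ ξ : Eucl q,
        ((fun ξ => K ξ ^ ((1:ℝ)/2)) * fun ξ => K ξ ^ ((1:ℝ)/2) * G (η - (2 * Real.pi) • ξ)) ξ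
          = K ξ * G (η - (2 * Real.pi) • ξ) := by
      intro ξ
      simp only [Pi.mul_apply]
      rw [← mul_assoc, hhalf]
    rw [lintegral_congr hfg] at hH
    have hf2 : (∫⁻ ξ, (K ξ ^ ((1:ℝ)/2)) ^ (2:ℝ)) = A := by
      rw [hA]
      apply lintegral_congr
      intro ξ
      rw [hsq2, e2]
    have hg2 : (∫⁻ ξ, (K ξ ^ ((1:ℝ)/2) * G (η - (2 * Real.pi) • ξ)) ^ (2:ℝ))
        = ∫⁻ ξ, K ξ * G (η - (2 * Real.pi) • ξ) ^ 2 := by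
      apply lintegral_congr
      intro ξ
      rw [ENNReal.mul_rpow_of_nonneg _ _ (by norm_num : (0:ℝ) ≤ 2), hsq2, e2, hsq2]
    rw [hf2, hg2] at hH
    calc (∫⁻ ξ, K ξ * G (η - (2 * Real.pi) • ξ)) ^ 2
        ≤ (A ^ ((1:ℝ)/(2:ℝ)) * (∫⁻ ξ, K ξ * G (η - (2 * Real.pi) • ξ) ^ 2) ^ ((1:ℝ)/(2:ℝ))) ^ 2 :=
          pow_le_pow_left' hH 2
    _ = A * ∫⁻ ξ, K ξ * G (η - (2 * Real.pi) • ξ) ^ 2 := by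
          rw [mul_pow, e2, e2]
  -- main chain
  have hprod_meas : AEMeasurable
      (Function.uncurry fun η ξ : Eucl q => K ξ * G (η - (2 * Real.pi) • ξ) ^ 2)
      (volume.prod volume) := by
    apply Measurable.aemeasurable
    apply Measurable.fun_mul
    · exact hK_meas.comp measurable_snd
    · apply Measurable.pow_const
      exact hG_meas.comp (measurable_fst.sub (measurable_snd.fun_const_smul _))
  have main : (∫⁻ η, F η ^ 2) ≤ A ^ 2 * B := by
    calc (∫⁻ η, F η ^ 2) ≤ ∫⁻ η, A * ∫⁻ ξ, K ξ * G (η - (2 * Real.pi) • ξ) ^ 2 := by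
          apply lintegral_mono
          intro η
          exact le_trans (pow_le_pow_left' (claim1 η) 2) (claim2 η)
    _ = A * ∫⁻ η, ∫⁻ ξ, K ξ * G (η - (2 * Real.pi) • ξ) ^ 2 :=
          lintegral_const_mul' _ _ hA_ne
    _ = A * ∫⁻ ξ, ∫⁻ η, K ξ * G (η - (2 * Real.pi) • ξ) ^ 2 := by
          rw [lintegral_lintegral_swap hprod_meas]
    _ = A * ∫⁻ ξ, K ξ * B := by
          congr 1
          apply lintegral_congr
          intro ξ
          rw [lintegral_const_mul' _ _ (hKne ξ)]
          congr 1
          rw [hB]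
          exact lintegral_sub_right_eq_self (fun ζ => G ζ ^ 2) ((2 * Real.pi) • ξ)
    _ = A * (B * A) := by
          congr 1
          rw [hA, ← lintegral_const_mul B hK_meas]
          apply lintegral_congr
          intro ξ
          exact mul_comm _ _
    _ = A ^ 2 * B := by ring
  -- conclude
  have hLHS : (∫⁻ η, ENNReal.ofReal (jap η ^ (2 * s)) *
      ((‖(ga.κ (jap η)).symm (ft (fun y => φ y • u y) η)‖₊ : ℝ≥0∞) ^ 2)) = ∫⁻ η, F η ^ 2 := by
    apply lintegral_congr
    intro η
    simp only [hF]
    exact hsq _ _ (jap_pos η)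
  have hRHS : (∫⁻ η, ENNReal.ofReal (jap η ^ (2 * s)) *
      ((‖(ga.κ (jap η)).symm (ft (⇑u) η)‖₊ : ℝ≥0∞) ^ 2)) = B := by
    rw [hB]
    apply lintegral_congr
    intro η
    simp only [hG, hw]
    exact hsq _ _ (jap_pos η)
  rw [hLHS, hRHS]
  refine le_trans main ?_
  apply mul_le_mul_left
  have hAle : A ≤ ENNReal.ofReal (max A.toReal 1) := by
    calc A = ENNReal.ofReal A.toReal := (ENNReal.ofReal_toReal hA_ne).symm
    _ ≤ ENNReal.ofReal (max A.toReal 1) := ENNReal.ofReal_le_ofReal (le_max_left _ _)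
  rw [ENNReal.ofReal_pow (le_trans zero_le_one (le_max_right _ _))]
  exact pow_le_pow_left' hAle 2
end
end

section
/- Let H be a complex Hilbert space with group action κ, s ∈ ℝ, and let p : ℝ^q → ℝ be a continuous function such that c·⟨η⟩ ≤ p(η) ≤ C·⟨η⟩ for all η ∈ ℝ^q and some constants c, C > 0. Then there exist constants c', C' > 0 such that for all u ∈ 𝒮(ℝ^q, H): c' · ∫ ⟨η⟩^{2s} ‖κ_{⟨η⟩}^{−1} û(η)‖² dη ≤ ∫ p(η)^{2s} ‖κ_{p(η)}^{−1} û(η)‖² dη ≤ C' · ∫ ⟨η⟩^{2s} ‖κ_{⟨η⟩}^{−1} û(η)‖² dη; i.e. replacing ⟨η⟩ by any such function p (for instance p(η) = [η]) yields an equivalent norm on 𝒲^s(ℝ^q, H). -/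
open MeasureTheory Complex
open scoped ENNReal NNReal

noncomputable section

section Aux

variable {H : Type*} [NormedAddCommGroup H] [NormedSpace ℂ H] (ga : GroupAction H)

lemma GroupAction.kone (x : H) : ga.κ 1 x = x := by
  have h := ga.mul one_pos one_pos ((ga.κ 1).symm x)
  rwa [one_mul, (ga.κ 1).apply_symm_apply] at h

lemma GroupAction.ksymm {l : ℝ} (hl : 0 < l) (x : H) : (ga.κ l).symm x = ga.κ l⁻¹ x := by
  rw [ContinuousLinearEquiv.symm_apply_eq, ga.mul hl (inv_pos.mpr hl),
    mul_inv_cancel₀ hl.ne', ga.kone]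

lemma GroupAction.unif [CompleteSpace H] (a b : ℝ) (ha : 0 < a) :
    ∃ M : ℝ, 1 ≤ M ∧ ∀ l ∈ Set.Icc a b, ∀ x : H, ‖ga.κ l x‖ ≤ M * ‖x‖ := by
  have hpt : ∀ x : H, ∃ C, ∀ i : Set.Icc a b,
      ‖((ga.κ i : H →L[ℂ] H)) x‖ ≤ C := by
    intro x
    obtain ⟨C0, hC0⟩ := isCompact_Icc.exists_bound_of_continuousOn
      ((ga.strong_cont x).mono (fun l hl => lt_of_lt_of_le ha hl.1))
    exact ⟨C0, fun i => hC0 i i.2⟩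
  obtain ⟨M0, hM0⟩ := banach_steinhaus hpt
  refine ⟨max M0 1, le_max_right _ _, fun l hl x => ?_⟩
  calc ‖ga.κ l x‖ = ‖(ga.κ l : H →L[ℂ] H) x‖ := rfl
    _ ≤ ‖(ga.κ l : H →L[ℂ] H)‖ * ‖x‖ := (ga.κ l : H →L[ℂ] H).le_opNorm x
    _ ≤ max M0 1 * ‖x‖ :=
        mul_le_mul_of_nonneg_right ((hM0 ⟨l, hl⟩).trans (le_max_left _ _)) (norm_nonneg x)

lemma rpow_bounds_aux {c C r t : ℝ} (hc : 0 < c) (h1 : c ≤ r) (h2 : r ≤ C) :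
    min (c ^ t) (C ^ t) ≤ r ^ t ∧ r ^ t ≤ max (c ^ t) (C ^ t) := by
  rcases le_or_gt 0 t with ht | ht
  · exact ⟨le_trans (min_le_left _ _) (Real.rpow_le_rpow hc.le h1 ht),
      le_trans (Real.rpow_le_rpow (hc.trans_le h1).le h2 ht) (le_max_right _ _)⟩
  · exact ⟨le_trans (min_le_right _ _) (Real.rpow_le_rpow_of_nonpos (hc.trans_le h1) h2 ht.le),
      le_trans (Real.rpow_le_rpow_of_nonpos hc h1 ht.le) (le_max_left _ _)⟩

end Aux

/-- Replacing `⟨η⟩` by any continuous `p` with `c⟨η⟩ ≤ p(η) ≤ C⟨η⟩` yields an equivalent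
norm on `𝒲^s(ℝ^q, H)` (stated for squared norms of Schwartz functions). -/
theorem stmt15 {q : ℕ} (H : Type*) [NormedAddCommGroup H] [InnerProductSpace ℂ H]
    [CompleteSpace H] (ga : GroupAction H) (s : ℝ)
    (p : Eucl q → ℝ) (hp : Continuous p) (c C : ℝ) (hc : 0 < c) (hC : 0 < C)
    (hlow : ∀ η, c * jap η ≤ p η) (hup : ∀ η, p η ≤ C * jap η) :
    ∃ c' > (0 : ℝ), ∃ C' > (0 : ℝ), ∀ u : SchwartzMap (Eucl q) H,
      ENNReal.ofReal c' *
          (∫⁻ η, ENNReal.ofReal (jap η ^ (2 * s)) *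
            ((‖(ga.κ (jap η)).symm (ft (⇑u) η)‖₊ : ℝ≥0∞) ^ 2))
        ≤ (∫⁻ η, ENNReal.ofReal (p η ^ (2 * s)) *
            ((‖(ga.κ (p η)).symm (ft (⇑u) η)‖₊ : ℝ≥0∞) ^ 2)) ∧
      (∫⁻ η, ENNReal.ofReal (p η ^ (2 * s)) *
          ((‖(ga.κ (p η)).symm (ft (⇑u) η)‖₊ : ℝ≥0∞) ^ 2))
        ≤ ENNReal.ofReal C' *
          (∫⁻ η, ENNReal.ofReal (jap η ^ (2 * s)) *
            ((‖(ga.κ (jap η)).symm (ft (⇑u) η)‖₊ : ℝ≥0∞) ^ 2)) := by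
  obtain ⟨M, hM1, hM⟩ := ga.unif (min c C⁻¹) (max C c⁻¹) (lt_min hc (inv_pos.mpr hC))
  have hMpos : (0:ℝ) < M := lt_of_lt_of_le one_pos hM1
  set A := min (c ^ (2*s)) (C ^ (2*s)) with hAdef
  set B := max (c ^ (2*s)) (C ^ (2*s)) with hBdef
  have hApos : 0 < A := lt_min (Real.rpow_pos_of_pos hc _) (Real.rpow_pos_of_pos hC _)
  have hBpos : 0 < B := lt_of_lt_of_le hApos min_le_max
  refine ⟨A / M^2, by positivity, B * M^2, by positivity, fun u => ?_⟩
  have key : ∀ η : Eucl q, ∀ x : H,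
      ENNReal.ofReal (A / M^2) *
          (ENNReal.ofReal (jap η ^ (2*s)) * ((‖(ga.κ (jap η)).symm x‖₊ : ℝ≥0∞)^2))
        ≤ ENNReal.ofReal (p η ^ (2*s)) * ((‖(ga.κ (p η)).symm x‖₊ : ℝ≥0∞)^2) ∧
      ENNReal.ofReal (p η ^ (2*s)) * ((‖(ga.κ (p η)).symm x‖₊ : ℝ≥0∞)^2)
        ≤ ENNReal.ofReal (B * M^2) *
          (ENNReal.ofReal (jap η ^ (2*s)) * ((‖(ga.κ (jap η)).symm x‖₊ : ℝ≥0∞)^2)) := by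
    intro η x
    have hj : 0 < jap η := Real.sqrt_pos.mpr (by positivity)
    have hpp : 0 < p η := lt_of_lt_of_le (mul_pos hc hj) (hlow η)
    have hr1 : c ≤ p η / jap η := (le_div_iff₀ hj).mpr (hlow η)
    have hr2 : p η / jap η ≤ C := (div_le_iff₀ hj).mpr (hup η)
    have hrpos : 0 < p η / jap η := div_pos hpp hj
    obtain ⟨hA, hB⟩ := rpow_bounds_aux (t := 2*s) hc hr1 hr2
    have hsplit : p η ^ (2*s) = (p η / jap η) ^ (2*s) * jap η ^ (2*s) := by
      rw [← Real.mul_rpow hrpos.le hj.le, div_mul_cancel₀ _ hj.ne']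
    have h1 : ‖ga.κ (p η)⁻¹ x‖ ≤ M * ‖ga.κ (jap η)⁻¹ x‖ := by
      have harg : (p η / jap η)⁻¹ * (jap η)⁻¹ = (p η)⁻¹ := by
        field_simp
      have e : ga.κ (p η / jap η)⁻¹ (ga.κ (jap η)⁻¹ x) = ga.κ (p η)⁻¹ x := by
        rw [ga.mul (inv_pos.mpr hrpos) (inv_pos.mpr hj), harg]
      rw [← e]
      exact hM _ ⟨le_trans (min_le_right _ _) (inv_anti₀ hrpos hr2),
        le_trans (inv_anti₀ hc hr1) (le_max_right _ _)⟩ _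
    have h2 : ‖ga.κ (jap η)⁻¹ x‖ ≤ M * ‖ga.κ (p η)⁻¹ x‖ := by
      have harg : (p η / jap η) * (p η)⁻¹ = (jap η)⁻¹ := by
        field_simp
      have e : ga.κ (p η / jap η) (ga.κ (p η)⁻¹ x) = ga.κ (jap η)⁻¹ x := by
        rw [ga.mul hrpos (inv_pos.mpr hpp), harg]
      rw [← e]
      exact hM _ ⟨le_trans (min_le_left _ _) hr1, le_trans hr2 (le_max_left _ _)⟩ _
    rw [ga.ksymm hj, ga.ksymm hpp]
    have ensq : ∀ y : H, ((‖y‖₊ : ℝ≥0∞))^2 = ENNReal.ofReal (‖y‖^2) := fun y => by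
      rw [ENNReal.ofReal_pow (norm_nonneg y), ofReal_norm_eq_enorm, enorm_eq_nnnorm]
    constructor
    · rw [ensq, ensq, ← ENNReal.ofReal_mul (Real.rpow_nonneg hj.le _),
        ← ENNReal.ofReal_mul (Real.rpow_nonneg hpp.le _),
        ← ENNReal.ofReal_mul (le_of_lt (by positivity))]
      apply ENNReal.ofReal_le_ofReal
      have hsq : ‖ga.κ (jap η)⁻¹ x‖^2 ≤ (M * ‖ga.κ (p η)⁻¹ x‖)^2 :=
        pow_le_pow_left₀ (norm_nonneg _) h2 2
      have h3 : A * jap η ^ (2*s) ≤ p η ^ (2*s) := by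
        rw [hsplit]; exact mul_le_mul_of_nonneg_right hA (Real.rpow_nonneg hj.le _)
      rw [div_mul_eq_mul_div, div_le_iff₀ (by positivity)]
      nlinarith [mul_le_mul h3 hsq (pow_nonneg (norm_nonneg _) 2)
        (Real.rpow_nonneg hpp.le (2*s))]
    · rw [ensq, ensq, ← ENNReal.ofReal_mul (Real.rpow_nonneg hj.le _),
        ← ENNReal.ofReal_mul (Real.rpow_nonneg hpp.le _),
        ← ENNReal.ofReal_mul (le_of_lt (by positivity))]
      apply ENNReal.ofReal_le_ofReal
      have hsq : ‖ga.κ (p η)⁻¹ x‖^2 ≤ (M * ‖ga.κ (jap η)⁻¹ x‖)^2 :=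
        pow_le_pow_left₀ (norm_nonneg _) h1 2
      have h3 : p η ^ (2*s) ≤ B * jap η ^ (2*s) := by
        rw [hsplit]; exact mul_le_mul_of_nonneg_right hB (Real.rpow_nonneg hj.le _)
      nlinarith [mul_le_mul h3 hsq (pow_nonneg (norm_nonneg _) 2)
        (mul_nonneg hBpos.le (Real.rpow_nonneg hj.le (2*s)))]
  constructor
  · rw [← lintegral_const_mul' _ _ ENNReal.ofReal_ne_top]
    exact lintegral_mono fun η => (key η _).1
  · rw [← lintegral_const_mul' _ _ ENNReal.ofReal_ne_top]
    exact lintegral_mono fun η => (key η _).2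
end
end
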